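/- arXiv:1310.5253 — 5 statements merged into one kernel-verified Lean document; each statement's English description precedes it below -/
import Mathlib

section
/- Let ν, θ, η be finite positive Borel measures on a measurable space. Then the measures inf{ν, θ} and inf{ν, η} (greatest lower bounds in the lattice of measures) satisfy |inf{ν,θ} − inf{ν,η}| ≤ |θ − η| as measures, i.e. the total variation measure of their difference is dominated by the total variation measure of θ − η. -/
open MeasureTheory Set

lemma le_add_sub_aux {α : Type*} [MeasurableSpace α] (θ η : Measure α)
    [IsFiniteMeasure θ] [IsFiniteMeasure η] : θ ≤ η + (θ - η) := by
  obtain ⟨p, hp, h1, h2⟩ := hahn_decomposition (μ := θ) (ν := η)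
  have hres : η.restrict p ≤ θ.restrict p := by
    rw [Measure.le_iff]
    intro t ht
    rw [Measure.restrict_apply ht, Measure.restrict_apply ht]
    exact h1 (t ∩ p) (ht.inter hp) inter_subset_right
  rw [Measure.le_iff]
  intro E hE
  have hsplitθ : θ E = θ (E ∩ p) + θ (E \ p) := (measure_inter_add_diff E hp).symm
  have hsplitη : η (E ∩ p) + η (E \ p) = η E := measure_inter_add_diff E hp
  have hsub : (θ - η) (E ∩ p) = θ (E ∩ p) - η (E ∩ p) := by
    have : (θ - η) (E ∩ p) = ((θ - η).restrict p) E := by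
      rw [Measure.restrict_apply hE]
    rw [this, Measure.restrict_sub_eq_restrict_sub_restrict hp,
      Measure.sub_apply hE hres, Measure.restrict_apply hE, Measure.restrict_apply hE]
  have key : θ (E ∩ p) ≤ η (E ∩ p) + (θ - η) (E ∩ p) := by
    rw [hsub]
    exact le_add_tsub
  calc θ E = θ (E ∩ p) + θ (E \ p) := hsplitθ
    _ ≤ (η (E ∩ p) + (θ - η) (E ∩ p)) + η (E \ p) := by
        refine add_le_add key (h2 (E \ p) (hE.diff hp) ?_)
        exact fun x hx => hx.2
    _ = (η (E ∩ p) + η (E \ p)) + (θ - η) (E ∩ p) := by ring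
    _ ≤ η E + (θ - η) E := by
        rw [hsplitη]
        exact add_le_add le_rfl (measure_mono inter_subset_left)

lemma inf_le_inf_add_aux {α : Type*} [MeasurableSpace α] (ν θ η δ : Measure α)
    (h : θ ≤ η + δ) : ν ⊓ θ ≤ (ν ⊓ η) + δ := by
  rw [Measure.le_iff]
  intro s hs
  rw [Measure.add_apply, Measure.inf_apply hs, Measure.inf_apply hs, ENNReal.sInf_add]
  refine le_iInf₂ fun m hm => ?_
  obtain ⟨t, rfl⟩ := hm
  have hmem : ν (t ∩ s) + θ (tᶜ ∩ s) ∈ {m | ∃ u, m = ν (u ∩ s) + θ (uᶜ ∩ s)} := ⟨t, rfl⟩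
  refine (sInf_le hmem).trans ?_
  have hθ : θ (tᶜ ∩ s) ≤ η (tᶜ ∩ s) + δ (tᶜ ∩ s) := by
    have := Measure.le_iff'.mp h (tᶜ ∩ s)
    rwa [Measure.add_apply] at this
  calc ν (t ∩ s) + θ (tᶜ ∩ s) ≤ ν (t ∩ s) + (η (tᶜ ∩ s) + δ (tᶜ ∩ s)) :=
        add_le_add le_rfl hθ
    _ = (ν (t ∩ s) + η (tᶜ ∩ s)) + δ (tᶜ ∩ s) := by ring
    _ ≤ (ν (t ∩ s) + η (tᶜ ∩ s)) + δ s := add_le_add le_rfl (measure_mono inter_subset_right)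

/-- for finite positive measures `ν, θ, η`, the lattice infima satisfy
`|inf{ν,θ} − inf{ν,η}| ≤ |θ − η|` as measures, where the total variation measure of a
difference of positive measures `μ₁ − μ₂` is `(μ₁ − μ₂) + (μ₂ − μ₁)` (truncated
measure subtraction). -/
theorem stmt10 {α : Type*} [MeasurableSpace α] (ν θ η : Measure α)
    [IsFiniteMeasure ν] [IsFiniteMeasure θ] [IsFiniteMeasure η] :
    ((ν ⊓ θ) - (ν ⊓ η)) + ((ν ⊓ η) - (ν ⊓ θ)) ≤ (θ - η) + (η - θ) := by
  have h1 : (ν ⊓ θ) - (ν ⊓ η) ≤ θ - η := by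
    apply Measure.sub_le_of_le_add
    rw [add_comm]
    exact inf_le_inf_add_aux ν θ η (θ - η) (le_add_sub_aux θ η)
  have h2 : (ν ⊓ η) - (ν ⊓ θ) ≤ η - θ := by
    apply Measure.sub_le_of_le_add
    rw [add_comm]
    exact inf_le_inf_add_aux ν η θ (η - θ) (le_add_sub_aux η θ)
  exact add_le_add h1 h2
end

section
/- Let (Q, μ) be a finite measure space, {a_n} a sequence converging to a weakly in L¹(Q, μ), and {b_n} a sequence bounded in L^∞(Q, μ) converging to b μ-a.e. Then ∫_Q a_n b_n dμ → ∫_Q a b dμ. -/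
open MeasureTheory Filter

set_option synthInstance.maxHeartbeats 1000000
set_option maxHeartbeats 1000000

namespace Stmt11Aux
open Set
open scoped ENNReal

variable {Q : Type*} [MeasurableSpace Q] {μ : Measure Q}

/-- Absolute continuity of the integral of a single integrable function. -/
lemma single_ac {f : Q → ℝ}
    (hf : Integrable f μ) {ε : ℝ} (hε : 0 < ε) :
    ∃ δ : ℝ, 0 < δ ∧ ∀ s : Set Q, μ s < ENNReal.ofReal δ → ∫ x in s, |f x| ∂μ ≤ ε := by
  have hfin : ∫⁻ x, ‖f x‖₊ ∂μ ≠ ∞ := hf.2.ne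
  obtain ⟨δ, hδ0, hδ⟩ := exists_pos_setLIntegral_lt_of_measure_lt (μ := μ) hfin
    (ε := ENNReal.ofReal ε) ((ENNReal.ofReal_pos.2 hε).ne')
  refine ⟨(min δ 1).toReal, ?_, ?_⟩
  · apply ENNReal.toReal_pos
    · simp [min_eq_iff, hδ0.ne']
    · exact ne_top_of_le_ne_top (by simp) (min_le_right _ _)
  · intro s hs
    have hsδ : μ s < δ := by
      refine lt_of_lt_of_le hs ?_
      rw [ENNReal.ofReal_toReal (ne_top_of_le_ne_top (by simp) (min_le_right _ _))]
      exact min_le_left _ _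
    have h1 := (hδ s hsδ).le
    have : ∫ x in s, |f x| ∂μ = (∫⁻ x in s, ‖f x‖₊ ∂μ).toReal := by
      rw [integral_eq_lintegral_of_nonneg_ae (Filter.Eventually.of_forall fun x => abs_nonneg _)
        (hf.abs.aestronglyMeasurable.restrict)]
      congr 1
      apply lintegral_congr fun x => ?_
      rw [← Real.enorm_eq_ofReal (abs_nonneg _)]
      simp [Real.nnnorm_abs]
      rfl
    rw [this]
    calc (∫⁻ x in s, ‖f x‖₊ ∂μ).toReal ≤ (ENNReal.ofReal ε).toReal :=
          ENNReal.toReal_mono (by simp) h1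
      _ = ε := ENNReal.toReal_ofReal hε.le

/-- The set of a.e. `{0,1}`-valued elements of `L¹`. -/
def indSet (μ : Measure Q) : Set (Lp ℝ 1 μ) :=
  {f | ∀ᵐ x ∂μ, (f : Q → ℝ) x = 0 ∨ (f : Q → ℝ) x = 1}

/-- The pairing `ν n f = ∫ aₙ f`. -/
noncomputable def nu (μ : Measure Q) (a : ℕ → Q → ℝ) (n : ℕ) (f : Lp ℝ 1 μ) : ℝ :=
  ∫ x, a n x * (f : Q → ℝ) x ∂μ

lemma isClosed_indSet : IsClosed (indSet μ) := by
  apply IsSeqClosed.isClosed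
  intro g f hg hgf
  obtain ⟨ns, -, hns⟩ := (tendstoInMeasure_of_tendsto_Lp hgf).exists_seq_tendsto_ae
  have hS : IsClosed ({0, 1} : Set ℝ) := (Set.finite_singleton _ |>.insert _).isClosed
  have hmem : ∀ᵐ x ∂μ, ∀ i, (g (ns i) : Q → ℝ) x = 0 ∨ (g (ns i) : Q → ℝ) x = 1 := by
    rw [MeasureTheory.ae_all_iff]; exact fun i => hg (ns i)
  filter_upwards [hns, hmem] with x hx hmemx
  have : f x ∈ ({0, 1} : Set ℝ) := by
    apply hS.mem_of_tendsto hx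
    filter_upwards with i
    rcases hmemx i with h | h <;> simp [h]
  simpa using this

lemma mem_indSet_exists_set (f : Lp ℝ 1 μ) (hf : f ∈ indSet μ) :
    ∃ A : Set Q, MeasurableSet A ∧ (f : Q → ℝ) =ᵐ[μ] A.indicator (fun _ => (1:ℝ)) := by
  refine ⟨(f : Q → ℝ) ⁻¹' {1}, (Lp.stronglyMeasurable f).measurable (measurableSet_singleton _), ?_⟩
  filter_upwards [hf] with x hx
  rcases hx with h | h
  · rw [h, Set.indicator_of_notMem]; simp [h]
  · rw [h, Set.indicator_of_mem]; exact h

lemma integrable_mul_ind {a : Q → ℝ} (ha : Integrable a μ) (f : Lp ℝ 1 μ)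
    (hf : f ∈ indSet μ) : Integrable (fun x => a x * (f : Q → ℝ) x) μ := by
  have hbd : ∀ᵐ x ∂μ, ‖(f : Q → ℝ) x‖ ≤ 1 := by
    filter_upwards [hf] with x hx; rcases hx with h | h <;> simp [h]
  have := Integrable.bdd_mul (f := (f : Q → ℝ)) (g := a) ha (Lp.aestronglyMeasurable f) hbd
  simpa [mul_comm] using this

lemma nu_eq_setIntegral {a : ℕ → Q → ℝ} (n : ℕ) (f : Lp ℝ 1 μ) {A : Set Q}
    (hA : MeasurableSet A) (hfA : (f : Q → ℝ) =ᵐ[μ] A.indicator (fun _ => (1:ℝ))) :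
    nu μ a n f = ∫ x in A, a n x ∂μ := by
  rw [nu, ← integral_indicator hA]
  apply integral_congr_ae
  filter_upwards [hfA] with x hx
  rw [hx]
  by_cases hxA : x ∈ A <;> simp [hxA]

lemma abs_nu_sub_le {a : ℕ → Q → ℝ} (ha : ∀ n, Integrable (a n) μ) (n : ℕ)
    {f g : Lp ℝ 1 μ} (hf : f ∈ indSet μ) (hg : g ∈ indSet μ) {δ η : ℝ}
    (hδ : ∀ s : Set Q, μ s < ENNReal.ofReal δ → ∫ x in s, |a n x| ∂μ ≤ η)
    (hfg : ‖f - g‖ < δ) : |nu μ a n f - nu μ a n g| ≤ η := by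
  classical
  have hfm : StronglyMeasurable (f : Q → ℝ) := Lp.stronglyMeasurable f
  have hgm : StronglyMeasurable (g : Q → ℝ) := Lp.stronglyMeasurable g
  set D : Set Q := {x | (f : Q → ℝ) x ≠ (g : Q → ℝ) x} with hDdef
  have hD : MeasurableSet D :=
    (measurableSet_eq_fun hfm.measurable hgm.measurable).compl
  have hcoe : (⇑(f - g) : Q → ℝ) =ᵐ[μ] ⇑f - ⇑g := Lp.coeFn_sub f g
  -- bound on μ D
  have hμD : μ D < ENNReal.ofReal δ := by
    have h1 : μ D ≤ ∫⁻ x in D, ‖(f : Q → ℝ) x - (g : Q → ℝ) x‖₊ ∂μ := by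
      rw [← setLIntegral_one]
      apply setLIntegral_mono_ae ((hfm.measurable.sub hgm.measurable).nnnorm.coe_nnreal_ennreal.aemeasurable)
      filter_upwards [hf, hg] with x hfx hgx hxD
      have hne : (f : Q → ℝ) x - (g : Q → ℝ) x ≠ 0 := sub_ne_zero_of_ne hxD
      rcases hfx with h1 | h1 <;> rcases hgx with h2 | h2 <;>
        simp [h1, h2] at hne ⊢
    have h2 : ∫⁻ x in D, ‖(f : Q → ℝ) x - (g : Q → ℝ) x‖₊ ∂μ ≤ eLpNorm (⇑(f - g)) 1 μ := by
      rw [eLpNorm_one_eq_lintegral_enorm]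
      refine le_trans (setLIntegral_le_lintegral _ _) (le_of_eq ?_)
      apply lintegral_congr_ae
      filter_upwards [hcoe] with x hx
      rw [hx]; simp
      rfl
    have h3 : eLpNorm (⇑(f - g)) 1 μ = ENNReal.ofReal ‖f - g‖ := by
      rw [Lp.norm_def, ENNReal.ofReal_toReal (Lp.eLpNorm_ne_top _)]
    exact lt_of_le_of_lt (h1.trans (h2.trans h3.le))
      (ENNReal.ofReal_lt_ofReal_iff_of_nonneg (norm_nonneg _) |>.2 hfg)
  -- bound |ν f - ν g| ≤ ∫_D |a n|
  have hint_f := integrable_mul_ind (ha n) f hf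
  have hint_g := integrable_mul_ind (ha n) g hg
  have key : |nu μ a n f - nu μ a n g| ≤ ∫ x in D, |a n x| ∂μ := by
    have e1 : nu μ a n f - nu μ a n g
        = ∫ x, a n x * ((f : Q → ℝ) x - (g : Q → ℝ) x) ∂μ := by
      rw [nu, nu, ← integral_sub hint_f hint_g]
      congr 1; funext x; ring
    rw [e1]
    calc |∫ x, a n x * ((f : Q → ℝ) x - (g : Q → ℝ) x) ∂μ|
        = ‖∫ x, a n x * ((f : Q → ℝ) x - (g : Q → ℝ) x) ∂μ‖ := (Real.norm_eq_abs _).symm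
      _ ≤ ∫ x, ‖a n x * ((f : Q → ℝ) x - (g : Q → ℝ) x)‖ ∂μ :=
          norm_integral_le_integral_norm _
      _ = ∫ x in D, ‖a n x * ((f : Q → ℝ) x - (g : Q → ℝ) x)‖ ∂μ := by
          rw [← integral_indicator hD]
          congr 1; funext x
          by_cases hx : x ∈ D
          · rw [Set.indicator_of_mem hx]
          · rw [Set.indicator_of_notMem hx]
            have : (f : Q → ℝ) x = (g : Q → ℝ) x := not_not.mp hx
            simp [this]
      _ ≤ ∫ x in D, |a n x| ∂μ := by
          apply integral_mono_ae ((hint_f.sub hint_g).congr ?_).norm.restrict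
            ((ha n).abs.restrict)
          · filter_upwards [ae_restrict_of_ae hf, ae_restrict_of_ae hg] with x h1 h2
            have hd : |(f : Q → ℝ) x - (g : Q → ℝ) x| ≤ 1 := by
              rcases h1 with h1 | h1 <;> rcases h2 with h2 | h2 <;> simp [h1, h2]
            calc ‖a n x * ((f : Q → ℝ) x - (g : Q → ℝ) x)‖
                = |a n x| * |(f : Q → ℝ) x - (g : Q → ℝ) x| := by
                  rw [Real.norm_eq_abs, abs_mul]
              _ ≤ |a n x| * 1 := by
                  exact mul_le_mul_of_nonneg_left hd (abs_nonneg _)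
              _ = |a n x| := mul_one _
          · filter_upwards with x; simp [mul_sub]
  exact key.trans (hδ D hμD)

/-- Vitali–Hahn–Saks style uniform absolute continuity. -/
lemma vhs (μ : Measure Q) [IsFiniteMeasure μ]
    (a : ℕ → Q → ℝ) (ha : ∀ n, Integrable (a n) μ)
    (hconv : ∀ A : Set Q, MeasurableSet A →
      ∃ L : ℝ, Tendsto (fun n => ∫ x in A, a n x ∂μ) atTop (nhds L))
    {ε : ℝ} (hε : 0 < ε) :
    ∃ δ : ℝ, 0 < δ ∧ ∀ n, ∀ A : Set Q, MeasurableSet A → μ A < ENNReal.ofReal δ →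
      ∫ x in A, |a n x| ∂μ ≤ ε := by
  classical
  have hε8 : 0 < ε / 8 := by linarith
  have hε4 : 0 < ε / 4 := by linarith
  -- the closed subsets Fₖ of the complete space indSet μ
  set T := (indSet μ) with hT
  have hTclosed : IsClosed T := isClosed_indSet
  haveI : CompleteSpace T := hTclosed.completeSpace_coe
  haveI : Nonempty T := ⟨⟨0, by
    show ∀ᵐ x ∂μ, _
    filter_upwards [Lp.coeFn_zero (E := ℝ) (p := 1) (μ := μ)] with x hx
    exact Or.inl hx⟩⟩
  set F : ℕ → Set T := fun k =>
    {f | ∀ m, k ≤ m → ∀ n, k ≤ n → |nu μ a m f.1 - nu μ a n f.1| ≤ ε / 8} with hF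
  -- continuity of nu along sequences within T
  have hcont : ∀ n (u : ℕ → T) (f : T), Tendsto u atTop (nhds f) →
      Tendsto (fun j => nu μ a n (u j).1) atTop (nhds (nu μ a n f.1)) := by
    intro n u f hu
    rw [Metric.tendsto_atTop]
    intro η hη
    obtain ⟨δ, hδ0, hδ⟩ := single_ac (ha n) (half_pos hη)
    have hu' : Tendsto (fun j => ((u j : Lp ℝ 1 μ))) atTop (nhds (f : Lp ℝ 1 μ)) :=
      (continuous_subtype_val.tendsto f).comp hu
    have := (tendsto_iff_norm_sub_tendsto_zero.mp hu')
    obtain ⟨N, hN⟩ := (Metric.tendsto_atTop.mp this) δ hδ0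
    refine ⟨N, fun j hj => ?_⟩
    have hnorm : ‖(u j : Lp ℝ 1 μ) - (f : Lp ℝ 1 μ)‖ < δ := by
      have := hN j hj
      rwa [Real.dist_eq, sub_zero, abs_norm] at this
    have := abs_nu_sub_le ha n (u j).2 f.2 hδ hnorm
    rw [Real.dist_eq]
    exact lt_of_le_of_lt this (by linarith)
  -- each F k is closed
  have hFclosed : ∀ k, IsClosed (F k) := by
    intro k
    apply IsSeqClosed.isClosed
    intro u f hu huf
    intro m hm n hn
    have h1 : Tendsto (fun j => |nu μ a m (u j).1 - nu μ a n (u j).1|) atTop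
        (nhds (|nu μ a m f.1 - nu μ a n f.1|)) :=
      ((hcont m u f huf).sub (hcont n u f huf)).abs
    exact le_of_tendsto h1 (Eventually.of_forall fun j => hu j m hm n hn)
  -- the F k cover T
  have hFcover : (⋃ k, F k) = univ := by
    rw [eq_univ_iff_forall]
    intro f
    obtain ⟨A, hA, hfA⟩ := mem_indSet_exists_set f.1 f.2
    obtain ⟨L, hL⟩ := hconv A hA
    have hCauchy : CauchySeq (fun n => ∫ x in A, a n x ∂μ) := hL.cauchySeq
    obtain ⟨N, hN⟩ := Metric.cauchySeq_iff.mp hCauchy (ε / 8) hε8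
    refine mem_iUnion.2 ⟨N, fun m hm n hn => ?_⟩
    rw [nu_eq_setIntegral m f.1 hA hfA, nu_eq_setIntegral n f.1 hA hfA]
    rw [← Real.dist_eq]
    exact (hN m hm n hn).le
  -- Baire category
  obtain ⟨k, hk⟩ := nonempty_interior_of_iUnion_of_closed hFclosed hFcover
  obtain ⟨f₀, hf₀⟩ := hk
  obtain ⟨r, hr0, hball⟩ := Metric.isOpen_iff.mp isOpen_interior f₀ hf₀
  have hballF : Metric.ball f₀ r ⊆ F k := hball.trans interior_subset
  obtain ⟨A₀, hA₀, hfA₀⟩ := mem_indSet_exists_set f₀.1 f₀.2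
  -- indicators of sets close to A₀ are in the ball
  have hindmem : ∀ C : Set Q, MeasurableSet C →
      (∀ᵐ x ∂μ, (C.indicator (fun _ => (1:ℝ)) x - A₀.indicator (fun _ => (1:ℝ)) x = 0) ∨
        True) → True := fun _ _ _ => trivial
  -- main step: for B small, |∫_B a m - ∫_B a n| ≤ ε/4 for m n ≥ k
  have hsmall : ∀ B : Set Q, MeasurableSet B → μ B < ENNReal.ofReal r →
      ∀ m, k ≤ m → ∀ n, k ≤ n →
      |(∫ x in B, a m x ∂μ) - ∫ x in B, a n x ∂μ| ≤ ε / 4 := by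
    intro B hB hμB m hm n hn
    -- the two auxiliary indicator functions
    have hsub : ∀ (C : Set Q) (hC : MeasurableSet C) (D : Set Q) (hD : MeasurableSet D)
        (c : ℝ), μ D < ENNReal.ofReal r → ‖(c : ℝ)‖₊ = 1 →
        (⇑(indicatorConstLp 1 hC (measure_ne_top μ C) (1:ℝ) : Lp ℝ 1 μ)
            - ⇑(f₀ : Lp ℝ 1 μ) : Q → ℝ) =ᵐ[μ] D.indicator (fun _ => c) →
        (⟨indicatorConstLp 1 hC (measure_ne_top μ C) (1:ℝ), by
            show ∀ᵐ x ∂μ, _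
            filter_upwards [indicatorConstLp_coeFn (p := 1) (hs := hC)
              (hμs := measure_ne_top μ C) (c := (1:ℝ))] with x hx
            rw [hx]
            by_cases hxC : x ∈ C <;> simp [hxC]⟩ : T) ∈ F k := by
      intro C hC D hD c hμD hc hdiff
      apply hballF
      rw [Metric.mem_ball, Subtype.dist_eq, dist_eq_norm, Lp.norm_def]
      have : eLpNorm (⇑((indicatorConstLp 1 hC (measure_ne_top μ C) (1:ℝ)) - (f₀ : Lp ℝ 1 μ))) 1 μ
          = eLpNorm (D.indicator (fun _ => c)) 1 μ := by
        apply eLpNorm_congr_ae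
        filter_upwards [Lp.coeFn_sub (indicatorConstLp 1 hC (measure_ne_top μ C) (1:ℝ))
          (f₀ : Lp ℝ 1 μ), hdiff] with x h1 h2
        rw [h1]
        exact h2
      rw [this, eLpNorm_indicator_const hD one_ne_zero ENNReal.one_ne_top, enorm_eq_nnnorm, hc]
      simp only [ENNReal.toReal_one, one_div, inv_one, ENNReal.rpow_one, ENNReal.coe_one, one_mul]
      exact ENNReal.toReal_lt_of_lt_ofReal hμD
    -- apply to C = A₀ ∪ B
    have hμ1 : μ (B \ A₀) < ENNReal.ofReal r := lt_of_le_of_lt (measure_mono diff_subset) hμB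
    have hμ2 : μ (A₀ ∩ B) < ENNReal.ofReal r :=
      lt_of_le_of_lt (measure_mono inter_subset_right) hμB
    have hd1 : (⇑(indicatorConstLp 1 (hA₀.union hB) (measure_ne_top μ _) (1:ℝ) : Lp ℝ 1 μ)
        - ⇑(f₀ : Lp ℝ 1 μ) : Q → ℝ) =ᵐ[μ] (B \ A₀).indicator (fun _ => (1:ℝ)) := by
      filter_upwards [indicatorConstLp_coeFn (p := 1) (hs := hA₀.union hB)
        (hμs := measure_ne_top μ _) (c := (1:ℝ)), hfA₀] with x h1 h2
      simp only [Pi.sub_apply, h1, h2]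
      by_cases hx : x ∈ A₀ <;> by_cases hx' : x ∈ B <;>
        simp [Set.indicator, hx, hx']
    have hd2 : (⇑(indicatorConstLp 1 (hA₀.diff hB) (measure_ne_top μ _) (1:ℝ) : Lp ℝ 1 μ)
        - ⇑(f₀ : Lp ℝ 1 μ) : Q → ℝ) =ᵐ[μ] (A₀ ∩ B).indicator (fun _ => (-1:ℝ)) := by
      filter_upwards [indicatorConstLp_coeFn (p := 1) (hs := hA₀.diff hB)
        (hμs := measure_ne_top μ _) (c := (1:ℝ)), hfA₀] with x h1 h2
      simp only [Pi.sub_apply, h1, h2]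
      by_cases hx : x ∈ A₀ <;> by_cases hx' : x ∈ B <;>
        simp [Set.indicator, hx, hx']
    have hm1 := hsub (A₀ ∪ B) (hA₀.union hB) (B \ A₀) (hB.diff hA₀) 1 hμ1 (by simp) hd1
    have hm2 := hsub (A₀ \ B) (hA₀.diff hB) (A₀ ∩ B) (hA₀.inter hB) (-1) hμ2 (by simp) hd2
    have e1 := nu_eq_setIntegral (μ := μ) (a := a) m _ (hA₀.union hB)
      (indicatorConstLp_coeFn (p := 1) (hs := hA₀.union hB) (hμs := measure_ne_top μ _) (c := (1:ℝ)))
    have e2 := nu_eq_setIntegral (μ := μ) (a := a) n _ (hA₀.union hB)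
      (indicatorConstLp_coeFn (p := 1) (hs := hA₀.union hB) (hμs := measure_ne_top μ _) (c := (1:ℝ)))
    have e3 := nu_eq_setIntegral (μ := μ) (a := a) m _ (hA₀.diff hB)
      (indicatorConstLp_coeFn (p := 1) (hs := hA₀.diff hB) (hμs := measure_ne_top μ _) (c := (1:ℝ)))
    have e4 := nu_eq_setIntegral (μ := μ) (a := a) n _ (hA₀.diff hB)
      (indicatorConstLp_coeFn (p := 1) (hs := hA₀.diff hB) (hμs := measure_ne_top μ _) (c := (1:ℝ)))
    have hq1 := hm1 m hm n hn
    have hq2 := hm2 m hm n hn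
    rw [e1, e2] at hq1
    rw [e3, e4] at hq2
    -- ∫_B a = ∫_{A₀∪B} a - ∫_{A₀\B} a
    have hsplit : ∀ i : ℕ, (∫ x in B, a i x ∂μ)
        = (∫ x in A₀ ∪ B, a i x ∂μ) - ∫ x in A₀ \ B, a i x ∂μ := by
      intro i
      have := setIntegral_union (f := a i) (μ := μ) (s := A₀ \ B) (t := B)
        disjoint_sdiff_self_left hB ((ha i).integrableOn) ((ha i).integrableOn)
      rw [Set.diff_union_self] at this
      rw [this]
      ring
    rw [hsplit m, hsplit n]
    calc |(∫ x in A₀ ∪ B, a m x ∂μ) - (∫ x in A₀ \ B, a m x ∂μ)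
          - ((∫ x in A₀ ∪ B, a n x ∂μ) - ∫ x in A₀ \ B, a n x ∂μ)|
        ≤ |(∫ x in A₀ ∪ B, a m x ∂μ) - ∫ x in A₀ ∪ B, a n x ∂μ|
          + |(∫ x in A₀ \ B, a m x ∂μ) - ∫ x in A₀ \ B, a n x ∂μ| := by
          have : (∫ x in A₀ ∪ B, a m x ∂μ) - (∫ x in A₀ \ B, a m x ∂μ)
              - ((∫ x in A₀ ∪ B, a n x ∂μ) - ∫ x in A₀ \ B, a n x ∂μ)
              = ((∫ x in A₀ ∪ B, a m x ∂μ) - ∫ x in A₀ ∪ B, a n x ∂μ)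
              - ((∫ x in A₀ \ B, a m x ∂μ) - ∫ x in A₀ \ B, a n x ∂μ) := by ring
          rw [this]
          exact abs_sub _ _
      _ ≤ ε / 8 + ε / 8 := add_le_add hq1 hq2
      _ = ε / 4 := by ring
  -- choose δ combining r with absolute continuity of a₀,…,a_k
  choose δf hδf using fun i => single_ac (μ := μ) (ha i) hε4
  set δ : ℝ := min r ((Finset.range (k+1)).inf' ⟨0, by simp⟩ δf) with hδdef
  have hδ0 : 0 < δ := lt_min hr0 ((Finset.lt_inf'_iff _).2 fun i _ => (hδf i).1)
  have hδr : δ ≤ r := min_le_left _ _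
  have hδi : ∀ i, i ≤ k → δ ≤ δf i := fun i hi =>
    (min_le_right _ _).trans (Finset.inf'_le _ (Finset.mem_range.2 (by omega)))
  refine ⟨δ, hδ0, ?_⟩
  intro n A hA hμA
  have hsub' : ∀ s : Set Q, μ s < ENNReal.ofReal δ → ∀ i, i ≤ k →
      ∫ x in s, |a i x| ∂μ ≤ ε / 4 := fun s hs i hi =>
    (hδf i).2 s (hs.trans_le (ENNReal.ofReal_le_ofReal (hδi i hi)))
  by_cases hnk : n ≤ k
  · exact (hsub' A hμA n hnk).trans (by linarith)
  · have hkn : k ≤ n := by omega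
    have hbound : ∀ s : Set Q, MeasurableSet s → μ s ≤ μ A →
        |∫ x in s, a n x ∂μ| ≤ ε / 2 := by
      intro s hsmeas hsA
      have hs : μ s < ENNReal.ofReal δ := lt_of_le_of_lt hsA hμA
      have h1 := hsmall s hsmeas (hs.trans_le (ENNReal.ofReal_le_ofReal hδr)) n hkn k le_rfl
      have h2 : |∫ x in s, a k x ∂μ| ≤ ε / 4 := by
        calc |∫ x in s, a k x ∂μ| = ‖∫ x in s, a k x ∂μ‖ := (Real.norm_eq_abs _).symm
          _ ≤ ∫ x in s, ‖a k x‖ ∂μ := norm_integral_le_integral_norm _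
          _ = ∫ x in s, |a k x| ∂μ := by simp [Real.norm_eq_abs]
          _ ≤ ε / 4 := hsub' s hs k le_rfl
      calc |∫ x in s, a n x ∂μ|
          ≤ |(∫ x in s, a n x ∂μ) - ∫ x in s, a k x ∂μ| + |∫ x in s, a k x ∂μ| := by
            have := abs_add_le ((∫ x in s, a n x ∂μ) - ∫ x in s, a k x ∂μ) (∫ x in s, a k x ∂μ)
            simpa using this
        _ ≤ ε / 4 + ε / 4 := add_le_add h1 h2
        _ = ε / 2 := by ring
    -- split A by the sign of a measurable representative of `a n`
    set g : Q → ℝ := (ha n).1.mk (a n) with hgdef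
    have hgm : StronglyMeasurable g := (ha n).1.stronglyMeasurable_mk
    have hag : a n =ᵐ[μ] g := (ha n).1.ae_eq_mk
    set P : Set Q := {x | 0 ≤ g x} with hPdef
    have hP : MeasurableSet P := measurableSet_le measurable_const hgm.measurable
    have hS1 : MeasurableSet (A ∩ P) := hA.inter hP
    have hS2 : MeasurableSet (A \ P) := hA.diff hP
    have hsplit : ∫ x in A, |a n x| ∂μ
        = (∫ x in A ∩ P, |a n x| ∂μ) + ∫ x in A \ P, |a n x| ∂μ := by
      have hdisj : Disjoint (A ∩ P) (A \ P) :=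
        disjoint_sdiff_self_right.mono_left inter_subset_right
      have := setIntegral_union (f := fun x => |a n x|) (μ := μ) hdisj hS2
        ((ha n).abs.integrableOn) ((ha n).abs.integrableOn)
      rw [Set.inter_union_diff] at this
      exact this
    have h1 : ∫ x in A ∩ P, |a n x| ∂μ = ∫ x in A ∩ P, a n x ∂μ := by
      apply setIntegral_congr_ae hS1
      filter_upwards [hag] with x hx hmem
      rw [hx]
      exact abs_of_nonneg hmem.2
    have h2 : ∫ x in A \ P, |a n x| ∂μ = - ∫ x in A \ P, a n x ∂μ := by
      rw [← integral_neg]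
      apply setIntegral_congr_ae hS2
      filter_upwards [hag] with x hx hmem
      rw [hx]
      have : g x < 0 := by
        have := hmem.2
        simpa [hPdef] using this
      rw [abs_of_neg this]
    rw [hsplit, h1, h2]
    have b1 : ∫ x in A ∩ P, a n x ∂μ ≤ ε / 2 :=
      (le_abs_self _).trans (hbound _ hS1 (measure_mono inter_subset_left))
    have b2 : - ∫ x in A \ P, a n x ∂μ ≤ ε / 2 :=
      (neg_le_abs _).trans (hbound _ hS2 (measure_mono diff_subset))
    linarith

lemma linfty_ae_bound (φ : Lp ℝ ⊤ μ) : ∀ᵐ x ∂μ, ‖(φ : Q → ℝ) x‖ ≤ ‖φ‖ := by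
  filter_upwards [ae_le_eLpNormEssSup (f := (φ : Q → ℝ)) (μ := μ)] with x hx
  have h1 : eLpNormEssSup (φ : Q → ℝ) μ = eLpNorm (φ : Q → ℝ) ⊤ μ :=
    eLpNorm_exponent_top.symm
  rw [Lp.norm_def]
  calc ‖(φ : Q → ℝ) x‖ = ((‖(φ : Q → ℝ) x‖₊ : ℝ≥0∞)).toReal := by simp
    _ ≤ (eLpNorm (φ : Q → ℝ) ⊤ μ).toReal :=
        ENNReal.toReal_mono (Lp.eLpNorm_ne_top φ) (h1 ▸ hx)

lemma integrable_mul_linfty {a : Q → ℝ} (ha : Integrable a μ) (φ : Lp ℝ ⊤ μ) :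
    Integrable (fun x => a x * (φ : Q → ℝ) x) μ := by
  have := Integrable.bdd_mul (f := (φ : Q → ℝ)) (g := a) (c := ‖φ‖) ha
    (Lp.aestronglyMeasurable φ) (linfty_ae_bound φ)
  simpa [mul_comm] using this

lemma norm_bound (μ : Measure Q) [IsFiniteMeasure μ] (a : ℕ → Q → ℝ)
    (ha : ∀ n, Integrable (a n) μ)
    (hweak : ∀ φ : Q → ℝ, Measurable φ → (∃ C : ℝ, ∀ x, |φ x| ≤ C) →
      ∃ L : ℝ, Tendsto (fun n => ∫ x, a n x * φ x ∂μ) atTop (nhds L)) :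
    ∃ M : ℝ, ∀ n, ∫ x, |a n x| ∂μ ≤ M := by
  classical
  -- the continuous linear functionals on L∞
  have Tdef : ∀ n : ℕ, ∃ T : Lp ℝ ⊤ μ →L[ℝ] ℝ,
      ∀ φ : Lp ℝ ⊤ μ, T φ = ∫ x, a n x * (φ : Q → ℝ) x ∂μ := by
    intro n
    refine ⟨LinearMap.mkContinuous
      { toFun := fun φ => ∫ x, a n x * (φ : Q → ℝ) x ∂μ
        map_add' := ?_
        map_smul' := ?_ } (∫ x, |a n x| ∂μ) ?_, fun φ => rfl⟩
    · intro φ ψ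
      rw [← integral_add (integrable_mul_linfty (ha n) φ) (integrable_mul_linfty (ha n) ψ)]
      apply integral_congr_ae
      filter_upwards [Lp.coeFn_add φ ψ] with x hx
      rw [hx]
      simp [mul_add]
    · intro c φ
      simp only [RingHom.id_apply, smul_eq_mul]
      rw [← integral_const_mul]
      apply integral_congr_ae
      filter_upwards [Lp.coeFn_smul c φ] with x hx
      rw [hx]
      simp
      ring
    · intro φ
      simp only [LinearMap.coe_mk, AddHom.coe_mk]
      calc ‖∫ x, a n x * (φ : Q → ℝ) x ∂μ‖
          ≤ ∫ x, ‖a n x * (φ : Q → ℝ) x‖ ∂μ := norm_integral_le_integral_norm _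
        _ ≤ ∫ x, |a n x| * ‖φ‖ ∂μ := by
            apply integral_mono_ae (integrable_mul_linfty (ha n) φ).norm
              ((ha n).abs.mul_const _)
            filter_upwards [linfty_ae_bound φ] with x hx
            rw [norm_mul, Real.norm_eq_abs (a n x)]
            exact mul_le_mul_of_nonneg_left hx (abs_nonneg _)
        _ = (∫ x, |a n x| ∂μ) * ‖φ‖ := by rw [← integral_mul_const]
  choose T hT using Tdef
  -- pointwise boundedness via the weak convergence hypothesis
  have hpt : ∀ φ : Lp ℝ ⊤ μ, ∃ C : ℝ, ∀ n, ‖T n φ‖ ≤ C := by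
    intro φ
    set c : ℝ := ‖φ‖ with hc
    have hc0 : 0 ≤ c := norm_nonneg _
    set ψ : Q → ℝ := fun x => max (-c) (min c ((φ : Q → ℝ) x)) with hψ
    have hψm : Measurable ψ :=
      Measurable.max measurable_const
        (Measurable.min measurable_const (Lp.stronglyMeasurable φ).measurable)
    have hψb : ∀ x, |ψ x| ≤ c := by
      intro x
      rw [abs_le]
      constructor
      · exact le_max_left _ _
      · exact max_le (by linarith) ((min_le_left _ _))
    have hψφ : ψ =ᵐ[μ] (φ : Q → ℝ) := by
      filter_upwards [linfty_ae_bound φ] with x hx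
      rw [Real.norm_eq_abs, abs_le] at hx
      rw [hψ]
      simp only
      rw [min_eq_right hx.2, max_eq_right hx.1]
    obtain ⟨L, hL⟩ := hweak ψ hψm ⟨c, hψb⟩
    have heq : ∀ n, T n φ = ∫ x, a n x * ψ x ∂μ := by
      intro n
      rw [hT n φ]
      apply integral_congr_ae
      filter_upwards [hψφ] with x hx
      rw [hx]
    have hL' : Tendsto (fun n => ‖T n φ‖) atTop (nhds ‖L‖) := by
      simp_rw [heq]
      exact hL.norm
    obtain ⟨C, hC⟩ := hL'.bddAbove_range
    exact ⟨C, fun n => hC (Set.mem_range_self n)⟩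
  obtain ⟨M, hM⟩ := banach_steinhaus hpt
  refine ⟨M, fun n => ?_⟩
  -- test against the sign of a measurable representative of `a n`
  set g : Q → ℝ := (ha n).1.mk (a n) with hg
  have hgm : StronglyMeasurable g := (ha n).1.stronglyMeasurable_mk
  have hag : a n =ᵐ[μ] g := (ha n).1.ae_eq_mk
  set s : Q → ℝ := fun x => if 0 ≤ g x then (1:ℝ) else -1 with hs
  have hsm : StronglyMeasurable s := by
    apply StronglyMeasurable.ite (measurableSet_le measurable_const hgm.measurable)
      stronglyMeasurable_const stronglyMeasurable_const
  have hsb : ∀ x, ‖s x‖ ≤ 1 := by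
    intro x
    rw [hs]
    by_cases h : 0 ≤ g x <;> simp [h]
  have hmem : MemLp s ⊤ μ :=
    memLp_top_of_bound hsm.aestronglyMeasurable 1 (Eventually.of_forall hsb)
  set φ : Lp ℝ ⊤ μ := hmem.toLp s with hφ
  have hφnorm : ‖φ‖ ≤ 1 := by
    rw [Lp.norm_def]
    have h1 : eLpNorm (φ : Q → ℝ) ⊤ μ = eLpNorm s ⊤ μ :=
      eLpNorm_congr_ae (MemLp.coeFn_toLp hmem)
    rw [h1]
    have h2 : eLpNorm s ⊤ μ ≤ ENNReal.ofReal 1 := by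
      rw [eLpNorm_exponent_top]
      exact eLpNormEssSup_le_of_ae_bound (Eventually.of_forall hsb)
    calc (eLpNorm s ⊤ μ).toReal ≤ (ENNReal.ofReal 1).toReal :=
          ENNReal.toReal_mono ENNReal.ofReal_ne_top h2
      _ = 1 := by simp
  have hval : T n φ = ∫ x, |a n x| ∂μ := by
    rw [hT n φ]
    apply integral_congr_ae
    filter_upwards [MemLp.coeFn_toLp hmem, hag] with x h1 h2
    rw [h1, h2, hs]
    by_cases h : 0 ≤ g x
    · simp [h, abs_of_nonneg h]
    · push_neg at h
      simp [not_le.mpr h, abs_of_neg h]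
  calc ∫ x, |a n x| ∂μ = T n φ := hval.symm
    _ ≤ ‖T n φ‖ := le_abs_self _
    _ ≤ ‖T n‖ * ‖φ‖ := (T n).le_opNorm φ
    _ ≤ M * 1 := by
        apply mul_le_mul (hM n) hφnorm (norm_nonneg _)
        exact le_trans (norm_nonneg _) (hM n)
    _ = M := mul_one M


end Stmt11Aux

open Stmt11Aux in
/-- if `a_n → a` weakly in `L¹(μ)` and `b_n` is bounded in `L^∞(μ)` and
converges `μ`-a.e. to `b`, then `∫ a_n b_n dμ → ∫ a b dμ`. -/
theorem stmt11 {Q : Type*} [MeasurableSpace Q] (μ : Measure Q) [IsFiniteMeasure μ]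
    (a : ℕ → Q → ℝ) (alim : Q → ℝ) (b : ℕ → Q → ℝ) (blim : Q → ℝ)
    (ha : ∀ n, Integrable (a n) μ) (halim : Integrable alim μ)
    (hweak : ∀ φ : Q → ℝ, Measurable φ → (∃ C : ℝ, ∀ x, |φ x| ≤ C) →
      Tendsto (fun n => ∫ x, a n x * φ x ∂μ) atTop (nhds (∫ x, alim x * φ x ∂μ)))
    (hbmeas : ∀ n, Measurable (b n)) (hblimmeas : Measurable blim)
    (hbd : ∃ C : ℝ, ∀ n, ∀ᵐ x ∂μ, |b n x| ≤ C)
    (hae : ∀ᵐ x ∂μ, Tendsto (fun n => b n x) atTop (nhds (blim x))) :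
    Tendsto (fun n => ∫ x, a n x * b n x ∂μ) atTop (nhds (∫ x, alim x * blim x ∂μ)) := by
  classical
  obtain ⟨C₀, hC₀⟩ := hbd
  set C : ℝ := max C₀ 0 with hCdef
  have hC0 : 0 ≤ C := le_max_right _ _
  have hC : ∀ n, ∀ᵐ x ∂μ, |b n x| ≤ C := fun n => by
    filter_upwards [hC₀ n] with x hx; exact hx.trans (le_max_left _ _)
  have hCall : ∀ᵐ x ∂μ, ∀ n, |b n x| ≤ C := ae_all_iff.2 hC
  have hblim_bd : ∀ᵐ x ∂μ, |blim x| ≤ C := by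
    filter_upwards [hae, hCall] with x hx hbx
    exact le_of_tendsto hx.abs (Eventually.of_forall hbx)
  -- weak convergence against indicators gives set-integral convergence
  have hconv : ∀ A : Set Q, MeasurableSet A →
      ∃ L : ℝ, Tendsto (fun n => ∫ x in A, a n x ∂μ) atTop (nhds L) := by
    intro A hA
    have hφm : Measurable (A.indicator (fun _ => (1:ℝ))) :=
      measurable_const.indicator hA
    have hφb : ∀ x, |A.indicator (fun _ => (1:ℝ)) x| ≤ 1 := by
      intro x; by_cases hx : x ∈ A <;> simp [hx]
    have h := hweak _ hφm ⟨1, hφb⟩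
    have heq : ∀ c : Q → ℝ, (∫ x, c x * A.indicator (fun _ => (1:ℝ)) x ∂μ)
        = ∫ x in A, c x ∂μ := by
      intro c
      rw [← integral_indicator hA]
      congr 1; funext x
      by_cases hx : x ∈ A <;> simp [hx]
    refine ⟨∫ x in A, alim x ∂μ, ?_⟩
    rw [← heq alim]
    exact h.congr fun n => heq (a n)
  obtain ⟨M, hM⟩ := norm_bound μ a ha (fun φ hm hb => ⟨_, hweak φ hm hb⟩)
  have hM0 : 0 ≤ M := le_trans (integral_nonneg fun x => abs_nonneg _) (hM 0)
  -- integrability of the various products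
  have hint : ∀ n, Integrable (fun x => a n x * b n x) μ := by
    intro n
    have := Integrable.bdd_mul (f := b n) (g := a n) (c := C) (ha n)
      (hbmeas n).aestronglyMeasurable (by filter_upwards [hC n] with x hx; simpa using hx)
    simpa [mul_comm] using this
  have hint2 : ∀ n, Integrable (fun x => a n x * blim x) μ := by
    intro n
    have := Integrable.bdd_mul (f := blim) (g := a n) (c := C) (ha n)
      hblimmeas.aestronglyMeasurable (by filter_upwards [hblim_bd] with x hx; simpa using hx)
    simpa [mul_comm] using this
  have hint3 : ∀ n, Integrable (fun x => a n x * (b n x - blim x)) μ := by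
    intro n
    have := Integrable.bdd_mul (f := fun x => b n x - blim x) (g := a n) (c := 2*C) (ha n)
      ((hbmeas n).sub hblimmeas).aestronglyMeasurable
      (by filter_upwards [hC n, hblim_bd] with x h1 h2
          rw [Real.norm_eq_abs]
          calc |b n x - blim x| ≤ |b n x| + |blim x| := abs_sub _ _
            _ ≤ 2*C := by linarith)
    simpa [mul_comm] using this
  -- convergence of ∫ aₙ blim via the truncation of blim
  have h2 : Tendsto (fun n => ∫ x, a n x * blim x ∂μ) atTop
      (nhds (∫ x, alim x * blim x ∂μ)) := by
    set ψ : Q → ℝ := fun x => max (-C) (min C (blim x)) with hψdef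
    have hψm : Measurable ψ :=
      Measurable.max measurable_const (Measurable.min measurable_const hblimmeas)
    have hψb : ∀ x, |ψ x| ≤ C := by
      intro x
      rw [abs_le]
      exact ⟨le_max_left _ _, max_le (by linarith) (min_le_left _ _)⟩
    have hψblim : ψ =ᵐ[μ] blim := by
      filter_upwards [hblim_bd] with x hx
      rw [abs_le] at hx
      show max (-C) (min C (blim x)) = blim x
      rw [min_eq_right hx.2, max_eq_right hx.1]
    have h := hweak ψ hψm ⟨C, hψb⟩
    have heq : ∀ c : Q → ℝ, (∫ x, c x * ψ x ∂μ) = ∫ x, c x * blim x ∂μ := by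
      intro c
      apply integral_congr_ae
      filter_upwards [hψblim] with x hx
      rw [hx]
    rw [heq alim] at h
    exact h.congr fun n => heq (a n)
  -- the key claim : ∫ aₙ (bₙ - blim) → 0
  have hclaim : Tendsto (fun n => ∫ x, a n x * (b n x - blim x) ∂μ) atTop (nhds 0) := by
    rw [Metric.tendsto_atTop]
    intro ε hε
    have hεA : (0:ℝ) < ε / (4*C+4) := by positivity
    obtain ⟨δ, hδ0, hδ⟩ := vhs μ a ha hconv hεA
    have hεB : (0:ℝ) < ε / (2*M+2) := by positivity
    -- Egorov
    obtain ⟨t, ht, hμt, hunif⟩ := tendstoUniformlyOn_of_ae_tendsto'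
      (fun n => (hbmeas n).stronglyMeasurable) hblimmeas.stronglyMeasurable hae
      (show (0:ℝ) < δ/2 by linarith)
    have htδ : μ t < ENNReal.ofReal δ :=
      lt_of_le_of_lt hμt (ENNReal.ofReal_lt_ofReal_iff hδ0 |>.2 (by linarith))
    obtain ⟨N, hN⟩ := (Metric.tendstoUniformlyOn_iff.mp hunif (ε / (2*M+2)) hεB).exists_forall_of_atTop
    refine ⟨N, fun n hn => ?_⟩
    rw [Real.dist_eq, sub_zero]
    have hNn := hN n hn
    have hsplit : ∫ x, ‖a n x * (b n x - blim x)‖ ∂μ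
        = (∫ x in t, ‖a n x * (b n x - blim x)‖ ∂μ)
          + ∫ x in tᶜ, ‖a n x * (b n x - blim x)‖ ∂μ :=
      (integral_add_compl ht (hint3 n).norm).symm
    have hb1 : ∫ x in t, ‖a n x * (b n x - blim x)‖ ∂μ ≤ (ε / (4*C+4)) * (2*C) := by
      calc ∫ x in t, ‖a n x * (b n x - blim x)‖ ∂μ
          ≤ ∫ x in t, |a n x| * (2*C) ∂μ := by
            apply integral_mono_ae ((hint3 n).norm.restrict) (((ha n).abs.mul_const _).restrict)
            filter_upwards [ae_restrict_of_ae (hC n), ae_restrict_of_ae hblim_bd] with x h1 h3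
            rw [Real.norm_eq_abs, abs_mul]
            apply mul_le_mul_of_nonneg_left _ (abs_nonneg _)
            calc |b n x - blim x| ≤ |b n x| + |blim x| := abs_sub _ _
              _ ≤ 2*C := by linarith
        _ = (∫ x in t, |a n x| ∂μ) * (2*C) := by rw [← integral_mul_const]
        _ ≤ (ε / (4*C+4)) * (2*C) := by
            apply mul_le_mul_of_nonneg_right (hδ n t ht htδ) (by linarith)
    have hb2 : ∫ x in tᶜ, ‖a n x * (b n x - blim x)‖ ∂μ ≤ M * (ε / (2*M+2)) := by
      calc ∫ x in tᶜ, ‖a n x * (b n x - blim x)‖ ∂μ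
          ≤ ∫ x in tᶜ, |a n x| * (ε / (2*M+2)) ∂μ := by
            apply setIntegral_mono_on ((hint3 n).norm.integrableOn)
              (((ha n).abs.mul_const _).integrableOn) ht.compl
            intro x hx
            rw [Real.norm_eq_abs, abs_mul]
            apply mul_le_mul_of_nonneg_left _ (abs_nonneg _)
            have := hNn x hx
            rw [Real.dist_eq] at this
            rw [abs_sub_comm] at this
            exact this.le
        _ = (∫ x in tᶜ, |a n x| ∂μ) * (ε / (2*M+2)) := by rw [← integral_mul_const]
        _ ≤ M * (ε / (2*M+2)) := by
            apply mul_le_mul_of_nonneg_right _ hεB.le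
            calc ∫ x in tᶜ, |a n x| ∂μ ≤ ∫ x, |a n x| ∂μ :=
                  setIntegral_le_integral (ha n).abs
                    (Eventually.of_forall fun x => abs_nonneg _)
              _ ≤ M := hM n
    calc |∫ x, a n x * (b n x - blim x) ∂μ|
        = ‖∫ x, a n x * (b n x - blim x) ∂μ‖ := (Real.norm_eq_abs _).symm
      _ ≤ ∫ x, ‖a n x * (b n x - blim x)‖ ∂μ := norm_integral_le_integral_norm _
      _ ≤ (ε / (4*C+4)) * (2*C) + M * (ε / (2*M+2)) := by rw [hsplit]; exact add_le_add hb1 hb2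
      _ < ε := by
          have h1 : (ε / (4*C+4)) * (2*C) < ε/2 := by
            rw [div_mul_eq_mul_div, div_lt_div_iff₀ (by linarith) (by norm_num)]
            nlinarith
          have h2 : M * (ε / (2*M+2)) < ε/2 := by
            rw [mul_div_assoc', div_lt_div_iff₀ (by linarith) (by norm_num)]
            nlinarith
          linarith
  -- put things together
  have hD : (fun n => ∫ x, a n x * b n x ∂μ)
      = fun n => (∫ x, a n x * (b n x - blim x) ∂μ) + ∫ x, a n x * blim x ∂μ := by
    funext n
    rw [← integral_add (hint3 n) (hint2 n)]
    congr 1; funext x; ring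
  rw [hD]
  simpa using hclaim.add h2
end

section
/- Fix k > 0 and ℓ > 2k. Define T_s(r) = max(min(r, s), −s). Let v ∈ ℝ and w ∈ ℝ with |w| ≤ k, and set R = T_{ℓ+k}(v − w) − T_{ℓ−k}(v − T_k(v)). Then: (i) |R| ≤ 4k; (ii) if |v| ≥ ℓ + 2k then R = 2k·sign(v). -/
/-- Truncation at level `s`: `T_s(r) = max(min(r,s), −s)`. -/
def trunc (s r : ℝ) : ℝ := max (min r s) (-s)

lemma trunc_lip (s x y : ℝ) : |trunc s x - trunc s y| ≤ |x - y| := by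
  unfold trunc
  rcases min_cases x s with ⟨h1,h2⟩|⟨h1,h2⟩ <;> rw [h1] <;>
  rcases min_cases y s with ⟨h3,h4⟩|⟨h3,h4⟩ <;> rw [h3] <;>
  rcases le_total x (-s) with h5|h5 <;> rcases le_total y (-s) with h6|h6 <;>
  rcases le_total s (-s) with h7|h7 <;>
  rw [abs_sub_le_iff] at * <;>
  constructor <;>
  simp only [max_def] <;> split_ifs <;>
  cases abs_cases (x - y) <;> linarith

lemma trunc_level (a b x : ℝ) (hb : 0 ≤ b) (hab : b ≤ a) :
    |trunc a x - trunc b x| ≤ a - b := by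
  unfold trunc
  rcases min_cases x a with ⟨h1,h2⟩|⟨h1,h2⟩ <;> rw [h1] <;>
  rcases min_cases x b with ⟨h3,h4⟩|⟨h3,h4⟩ <;> rw [h3] <;>
  rw [abs_sub_le_iff] <;> constructor <;>
  simp only [max_def] <;> split_ifs <;> linarith

/-- with `R = T_{ℓ+k}(v − w) − T_{ℓ−k}(v − T_k(v))`, `|w| ≤ k`, `ℓ > 2k`:
(i) `|R| ≤ 4k`; (ii) if `|v| ≥ ℓ + 2k` then `R = 2k·sign(v)`. -/
theorem stmt12 (k ℓ v w : ℝ) (hk : 0 < k) (hℓ : 2 * k < ℓ) (hw : |w| ≤ k) :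
    |trunc (ℓ + k) (v - w) - trunc (ℓ - k) (v - trunc k v)| ≤ 4 * k ∧
    (ℓ + 2 * k ≤ |v| →
      trunc (ℓ + k) (v - w) - trunc (ℓ - k) (v - trunc k v) = 2 * k * Real.sign v) := by
  rw [abs_le] at hw
  have htk : -k ≤ trunc k v ∧ trunc k v ≤ k := by
    unfold trunc
    constructor
    · exact le_max_right _ _
    · rcases min_cases v k with ⟨h1,h2⟩|⟨h1,h2⟩ <;> rw [h1] <;>
      simp only [max_def] <;> split_ifs <;> linarith
  constructor
  · have h1 := trunc_level (ℓ + k) (ℓ - k) (v - w) (by linarith) (by linarith)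
    have h2 := trunc_lip (ℓ - k) (v - w) (v - trunc k v)
    have h3 : |(v - w) - (v - trunc k v)| ≤ 2 * k := by
      rw [abs_le]; constructor <;> (obtain ⟨a,b⟩ := htk; linarith)
    calc |trunc (ℓ + k) (v - w) - trunc (ℓ - k) (v - trunc k v)|
        ≤ |trunc (ℓ + k) (v - w) - trunc (ℓ - k) (v - w)| +
          |trunc (ℓ - k) (v - w) - trunc (ℓ - k) (v - trunc k v)| := abs_sub_le _ _ _
      _ ≤ 4 * k := by linarith
  · intro hv
    rcases abs_cases v with ⟨he, hp⟩ | ⟨he, hn⟩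
    · rw [he] at hv
      have hvpos : 0 < v := by linarith
      rw [Real.sign_of_pos hvpos]
      have e1 : trunc k v = k := by
        unfold trunc; rw [min_eq_right (by linarith), max_eq_left (by linarith)]
      rw [e1]
      have e2 : trunc (ℓ + k) (v - w) = ℓ + k := by
        unfold trunc; rw [min_eq_right (by linarith), max_eq_left (by linarith)]
      have e3 : trunc (ℓ - k) (v - k) = ℓ - k := by
        unfold trunc; rw [min_eq_right (by linarith), max_eq_left (by linarith)]
      rw [e2, e3]; ring
    · rw [he] at hv
      have hvneg : v < 0 := by linarith
      rw [Real.sign_of_neg hvneg]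
      have e1 : trunc k v = -k := by
        unfold trunc; rw [min_eq_left (by linarith), max_eq_right (by linarith)]
      rw [e1]
      have e2 : trunc (ℓ + k) (v - w) = -(ℓ + k) := by
        unfold trunc; rw [min_eq_left (by linarith), max_eq_right (by linarith)]
      have e3 : trunc (ℓ - k) (v - -k) = -(ℓ - k) := by
        unfold trunc; rw [min_eq_left (by linarith), max_eq_right (by linarith)]
      rw [e2, e3]; ring
end

section
/- Fix k > 0 and ℓ > 2k. Define T_s(r) = max(min(r, s), −s), T̄_s(r) = ∫₀^r T_s(τ)dτ, J(r) = T_{ℓ−k}(r − T_k(r)) and J̄(r) = ∫₀^r J(τ)dτ. Then for all r, s ∈ ℝ with |s| ≤ k: (i) T̄_{ℓ+k}(r − s) − J̄(r) ≥ 0; (ii) T_{ℓ+k}(r − s)·(T_k(r) − s) ≥ 0; (iii) |T̄_{ℓ+k}(r − T_k(r)) − J̄(r)| ≤ 2k·|r|·χ_{{|r| ≥ ℓ}}. -/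
open MeasureTheory intervalIntegral

/-- Primitive of the truncation: `T̄_s(r) = ∫₀^r T_s(τ) dτ`. -/
noncomputable def truncBar (s r : ℝ) : ℝ := ∫ τ in (0:ℝ)..r, trunc s τ

/-- `J(r) = T_{ℓ−k}(r − T_k(r))`. -/
def Jfun (k ℓ r : ℝ) : ℝ := trunc (ℓ - k) (r - trunc k r)

/-- `J̄(r) = ∫₀^r J(τ) dτ`. -/
noncomputable def JfunBar (k ℓ r : ℝ) : ℝ := ∫ τ in (0:ℝ)..r, Jfun k ℓ τ

lemma trunc_cont (s : ℝ) : Continuous (trunc s) :=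
  (continuous_id.min continuous_const).max continuous_const

lemma trunc_of_mem {s x : ℝ} (h1 : -s ≤ x) (h2 : x ≤ s) : trunc s x = x := by
  unfold trunc; rw [min_eq_left h2, max_eq_left h1]

lemma trunc_of_ge {s x : ℝ} (hs : 0 ≤ s) (h : s ≤ x) : trunc s x = s := by
  unfold trunc; rw [min_eq_right h, max_eq_left (by linarith)]

lemma truncBar_pos_eq (s : ℝ) (hs : 0 ≤ s) (r : ℝ) (hr : 0 ≤ r) :
    truncBar s r = if r ≤ s then r^2/2 else s*r - s^2/2 := by
  have hint : ∀ a b : ℝ, IntervalIntegrable (trunc s) volume a b :=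
    fun a b => (trunc_cont s).intervalIntegrable a b
  have hid : ∀ a b : ℝ, 0 ≤ a → a ≤ b → b ≤ s →
      ∫ τ in a..b, trunc s τ = (b^2 - a^2)/2 := by
    intro a b ha hab hbs
    rw [integral_congr (g := fun τ => τ), integral_id]
    intro τ hτ
    rw [Set.uIcc_of_le hab] at hτ
    exact trunc_of_mem (by linarith [hτ.1]) (by linarith [hτ.2])
  unfold truncBar
  split_ifs with h
  · rw [hid 0 r le_rfl hr h]; ring_nf
  · push_neg at h
    rw [← integral_add_adjacent_intervals (b := s) (hint 0 s) (hint s r),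
      hid 0 s le_rfl hs le_rfl,
      integral_congr (g := fun _ => s) (fun τ hτ => by
        rw [Set.uIcc_of_le h.le] at hτ; exact trunc_of_ge hs hτ.1)]
    simp
    ring

lemma jfun_cont (k ℓ : ℝ) : Continuous (Jfun k ℓ) :=
  (trunc_cont _).comp (continuous_id.sub (trunc_cont k))

lemma trunc_odd (s : ℝ) (hs : 0 ≤ s) (x : ℝ) : trunc s (-x) = - trunc s x := by
  unfold trunc
  simp only [min_def, max_def]
  split_ifs <;> linarith

lemma jfun_odd (k ℓ : ℝ) (hk : 0 ≤ k) (hkl : k ≤ ℓ) (x : ℝ) :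
    Jfun k ℓ (-x) = - Jfun k ℓ x := by
  unfold Jfun
  rw [trunc_odd k hk, show -x - -trunc k x = -(x - trunc k x) by ring,
    trunc_odd _ (by linarith)]

-- primitive of odd function is even
lemma primitive_even {f : ℝ → ℝ} (hodd : ∀ x, f (-x) = - f x) (r : ℝ) :
    ∫ τ in (0:ℝ)..(-r), f τ = ∫ τ in (0:ℝ)..r, f τ := by
  have h1 : ∫ x in r..(0:ℝ), f (-x) = ∫ x in (0:ℝ)..(-r), f x := by
    simpa using integral_comp_neg (a := r) (b := 0) f
  rw [← h1]
  simp only [hodd]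
  rw [intervalIntegral.integral_neg, integral_symm, neg_neg]

lemma jfun_val_low {k ℓ x : ℝ} (h1 : -k ≤ x) (h2 : x ≤ k) (hkl : k ≤ ℓ) :
    Jfun k ℓ x = 0 := by
  unfold Jfun
  rw [trunc_of_mem h1 h2, sub_self, trunc_of_mem (by linarith) (by linarith)]

lemma jfun_val_mid {k ℓ x : ℝ} (hk : 0 ≤ k) (h1 : k ≤ x) (h2 : x ≤ ℓ) :
    Jfun k ℓ x = x - k := by
  unfold Jfun
  rw [trunc_of_ge hk h1, trunc_of_mem (by linarith) (by linarith)]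

lemma jfun_val_hi {k ℓ x : ℝ} (hk : 0 ≤ k) (hkl : k ≤ ℓ) (h1 : ℓ ≤ x) :
    Jfun k ℓ x = ℓ - k := by
  unfold Jfun
  rw [trunc_of_ge hk (by linarith), trunc_of_ge (by linarith) (by linarith)]

lemma jfunBar_pos_eq (k ℓ : ℝ) (hk : 0 ≤ k) (hkl : k ≤ ℓ) (r : ℝ) (hr : 0 ≤ r) :
    JfunBar k ℓ r = if r ≤ k then 0 else if r ≤ ℓ then (r-k)^2/2
      else (ℓ-k)*r - (ℓ^2-k^2)/2 := by
  have hint : ∀ a b : ℝ, IntervalIntegrable (Jfun k ℓ) volume a b :=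
    fun a b => (jfun_cont k ℓ).intervalIntegrable a b
  have hlow : ∀ b : ℝ, 0 ≤ b → b ≤ k → ∫ τ in (0:ℝ)..b, Jfun k ℓ τ = 0 := by
    intro b hb hbk
    rw [integral_congr (g := fun _ => (0:ℝ)) (fun τ hτ => by
      rw [Set.uIcc_of_le hb] at hτ
      exact jfun_val_low (by linarith [hτ.1]) (by linarith [hτ.2]) hkl)]
    simp
  have hmid : ∀ a b : ℝ, k ≤ a → a ≤ b → b ≤ ℓ →
      ∫ τ in a..b, Jfun k ℓ τ = (b-k)^2/2 - (a-k)^2/2 := by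
    intro a b ha hab hbl
    rw [integral_congr (g := fun τ => τ - k) (fun τ hτ => by
      rw [Set.uIcc_of_le hab] at hτ
      exact jfun_val_mid hk (by linarith [hτ.1]) (by linarith [hτ.2]))]
    rw [intervalIntegral.integral_sub (intervalIntegrable_id) (intervalIntegrable_const),
      integral_id, intervalIntegral.integral_const]
    simp only [smul_eq_mul]
    ring
  unfold JfunBar
  split_ifs with h1 h2
  · exact hlow r hr h1
  · push_neg at h1
    rw [← integral_add_adjacent_intervals (b := k) (hint 0 k) (hint k r),
      hlow k hk le_rfl, hmid k r le_rfl h1.le h2]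
    ring
  · push_neg at h1 h2
    rw [← integral_add_adjacent_intervals (b := ℓ) (hint 0 ℓ) (hint ℓ r),
      ← integral_add_adjacent_intervals (b := k) (hint 0 k) (hint k ℓ),
      hlow k hk le_rfl, hmid k ℓ le_rfl hkl le_rfl,
      integral_congr (g := fun _ => ℓ - k) (fun τ hτ => by
        rw [Set.uIcc_of_le h2.le] at hτ
        exact jfun_val_hi hk hkl hτ.1)]
    simp
    ring

lemma truncBar_eq (s : ℝ) (hs : 0 ≤ s) (r : ℝ) :
    truncBar s r = if |r| ≤ s then r^2/2 else s*|r| - s^2/2 := by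
  rcases le_total 0 r with hr | hr
  · rw [abs_of_nonneg hr]; exact truncBar_pos_eq s hs r hr
  · have he : truncBar s r = truncBar s (-r) := by
      have := primitive_even (f := trunc s) (trunc_odd s hs) (-r)
      unfold truncBar
      simpa using this
    rw [he, truncBar_pos_eq s hs (-r) (by linarith), abs_of_nonpos hr]
    ring_nf

lemma jfunBar_eq (k ℓ : ℝ) (hk : 0 ≤ k) (hkl : k ≤ ℓ) (r : ℝ) :
    JfunBar k ℓ r = if |r| ≤ k then 0 else if |r| ≤ ℓ then (|r|-k)^2/2
      else (ℓ-k)*|r| - (ℓ^2-k^2)/2 := by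
  rcases le_total 0 r with hr | hr
  · rw [abs_of_nonneg hr]; exact jfunBar_pos_eq k ℓ hk hkl r hr
  · have he : JfunBar k ℓ r = JfunBar k ℓ (-r) := by
      have := primitive_even (f := Jfun k ℓ) (jfun_odd k ℓ hk hkl) (-r)
      unfold JfunBar
      simpa using this
    rw [he, jfunBar_pos_eq k ℓ hk hkl (-r) (by linarith), abs_of_nonpos hr]

/-- for `|s| ≤ k`, `ℓ > 2k > 0`:
(i) `T̄_{ℓ+k}(r − s) − J̄(r) ≥ 0`; (ii) `T_{ℓ+k}(r − s)(T_k(r) − s) ≥ 0`;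
(iii) `|T̄_{ℓ+k}(r − T_k(r)) − J̄(r)| ≤ 2k|r|·χ_{|r| ≥ ℓ}`. -/
theorem stmt13 (k ℓ : ℝ) (hk : 0 < k) (hℓ : 2 * k < ℓ) :
    ∀ r s : ℝ, |s| ≤ k →
      0 ≤ truncBar (ℓ + k) (r - s) - JfunBar k ℓ r ∧
      0 ≤ trunc (ℓ + k) (r - s) * (trunc k r - s) ∧
      |truncBar (ℓ + k) (r - trunc k r) - JfunBar k ℓ r| ≤
        (if ℓ ≤ |r| then 2 * k * |r| else 0) := by
  intro r s hs
  have hk' : (0:ℝ) ≤ k := hk.le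
  have hkl : k ≤ ℓ := by linarith
  have hF := truncBar_eq (ℓ+k) (by linarith)
  have hG := jfunBar_eq k ℓ hk' hkl r
  have key : ∀ s' : ℝ, |s'| ≤ k →
      0 ≤ truncBar (ℓ + k) (r - s') - JfunBar k ℓ r := by
    intro s' hs'
    have hs1 : -k ≤ s' := (abs_le.1 hs').1
    have hs2 : s' ≤ k := (abs_le.1 hs').2
    rw [hF (r-s'), hG, ← sq_abs (r - s')]
    have ha0 : (0:ℝ) ≤ |r| := abs_nonneg r
    have hb0 : (0:ℝ) ≤ |r - s'| := abs_nonneg _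
    have hab : |r| - k ≤ |r - s'| := by
      have h1 := abs_sub_abs_le_abs_sub r s'
      linarith
    set a := |r|
    set b := |r - s'|
    split_ifs with h1 h2 h3 h2 h3
    · nlinarith [sq_nonneg b]
    · nlinarith
    · push_neg at h2 h3
      nlinarith [sq_nonneg (a - ℓ), mul_nonneg (by linarith : (0:ℝ) ≤ b - (a - k)) (by linarith : (0:ℝ) ≤ b + (a - k))]
    · push_neg at h1; nlinarith
    · push_neg at h1 h2; nlinarith
    · push_neg at h1 h2 h3; nlinarith
  have hs1 : -k ≤ s := (abs_le.1 hs).1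
  have hs2 : s ≤ k := (abs_le.1 hs).2
  have htr : |trunc k r| ≤ k := by
    rw [abs_le]
    exact ⟨le_max_right _ _, max_le (min_le_right _ _) (by linarith)⟩
  refine ⟨key s hs, ?_, ?_⟩
  · -- part (ii)
    rcases le_total s r with h | h
    · apply mul_nonneg
      · exact le_trans (le_min (by linarith) (by linarith)) (le_max_left _ _)
      · have : s ≤ max (min r k) (-k) :=
          le_trans (le_min h hs2) (le_max_left _ _)
        unfold trunc; linarith
    · have hf1 : trunc (ℓ+k) (r-s) ≤ 0 :=
        max_le (le_trans (min_le_left _ _) (by linarith)) (by linarith)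
      have hf2 : trunc k r - s ≤ 0 := by
        have : max (min r k) (-k) ≤ s := max_le (le_trans (min_le_left _ _) h) hs1
        unfold trunc; linarith
      nlinarith
  · -- part (iii)
    rw [abs_of_nonneg (key _ htr)]
    rcases le_or_gt (|r|) k with hak | hak
    · have hr1 : -k ≤ r := (abs_le.1 hak).1
      have hr2 : r ≤ k := (abs_le.1 hak).2
      rw [trunc_of_mem hr1 hr2, sub_self, hF 0, hG,
        if_pos (by rw [abs_zero]; linarith),
        if_pos hak, if_neg (by push_neg; linarith)]
      norm_num
    · have hb : |r - trunc k r| = |r| - k := by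
        rcases le_total r 0 with hr | hr
        · have hr' : r ≤ -k := by
            rw [abs_of_nonpos hr] at hak; linarith
          have : trunc k r = -k := by
            unfold trunc
            rw [min_eq_left (by linarith), max_eq_right (by linarith)]
          rw [this, abs_of_nonpos (by linarith), abs_of_nonpos hr]; ring
        · have hr' : k ≤ r := by
            rw [abs_of_nonneg hr] at hak; linarith
          rw [trunc_of_ge hk' hr', abs_of_nonneg (by linarith), abs_of_nonneg hr]
      rw [hF (r - trunc k r), hG, ← sq_abs (r - trunc k r), hb]
      have ha0 : (0:ℝ) ≤ |r| := abs_nonneg r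
      set a := |r|
      rw [if_neg (not_le.2 hak)]
      rcases le_or_gt a ℓ with h3 | h3
      · rw [if_pos h3, if_pos (by linarith : a - k ≤ ℓ + k)]
        rcases le_or_gt ℓ a with h4 | h4
        · rw [if_pos h4]; nlinarith
        · rw [if_neg (not_le.2 h4)]; linarith
      · rw [if_neg (not_le.2 h3), if_pos h3.le]
        rcases le_or_gt (a - k) (ℓ + k) with h1 | h1
        · rw [if_pos h1]; nlinarith [sq_nonneg (a - ℓ)]
        · rw [if_neg (not_le.2 h1)]; nlinarith
end

section
/- Let Ω ⊂ ℝ^N have finite Lebesgue measure, T > 0, Q = Ω×(0,T), p > 1, N ≥ 2, p_c = p − 1 + p/N, m_c = p − N/(N+1). Let v : Q → ℝ be measurable with |∇v| measurable, and suppose there exist constants C₁, c, M ≥ 1 such that: meas{|v| > s} ≤ C₁ M s^{-p_c} for all s ≥ 1, and ∫_{{|v| ≤ s}} |∇v|^p ≤ c M s for all s ≥ 1. Then there exists C₂ depending only on C₁, c (not on M or k) such that meas{|∇v| > k} ≤ C₂ (M + M^{(p+N)/N}) k^{-m_c} for all k ≥ 1. -/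
open MeasureTheory

/-- gradient measure estimate. If `meas{|v| > s} ≤ C₁ M s^{-p_c}` and
`∫_{|v|≤s} |∇v|^p ≤ c M s` for `s ≥ 1`, then `meas{|∇v| > k} ≤ C₂ (M + M^{(p+N)/N}) k^{-m_c}`
for all `k ≥ 1`, with `C₂` depending only on `C₁, c` (and `N, p`). -/
theorem stmt15 (N : ℕ) (hN : 2 ≤ N) (p : ℝ) (hp : 1 < p) (C₁ c : ℝ)
    (hC₁ : 1 ≤ C₁) (hc : 1 ≤ c) :
    ∃ C₂ : ℝ, 0 < C₂ ∧
      ∀ (Ω : Set (EuclideanSpace ℝ (Fin N))) (T : ℝ), MeasurableSet Ω → 0 < T →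
        volume Ω < ⊤ →
        ∀ M : ℝ, 1 ≤ M →
        ∀ v g : EuclideanSpace ℝ (Fin N) × ℝ → ℝ, Measurable v → Measurable g →
          (∀ s : ℝ, 1 ≤ s →
            (volume.restrict (Ω ×ˢ Set.Ioo 0 T)) {x | s < |v x|} ≤
              ENNReal.ofReal (C₁ * M * s ^ (-(p - 1 + p / N)))) →
          (∀ s : ℝ, 1 ≤ s →
            (∫⁻ x in {x | |v x| ≤ s}, ENNReal.ofReal (|g x| ^ p)
                ∂(volume.restrict (Ω ×ˢ Set.Ioo 0 T))) ≤
              ENNReal.ofReal (c * M * s)) →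
          ∀ k : ℝ, 1 ≤ k →
            (volume.restrict (Ω ×ˢ Set.Ioo 0 T)) {x | k < |g x|} ≤
              ENNReal.ofReal
                (C₂ * (M + M ^ ((p + N) / N)) * k ^ (-(p - N / (N + 1)))) := by
  refine ⟨C₁ + c, by positivity, ?_⟩
  intro Ω T hΩ hT hΩfin M hM v g hv hg h1 h2 k hk
  set μ := volume.restrict (Ω ×ˢ Set.Ioo 0 T) with hμ
  have hk0 : (0:ℝ) < k := lt_of_lt_of_le one_pos hk
  have hN0 : (0:ℝ) < (N:ℝ) := by positivity
  have hN1 : (0:ℝ) < (N:ℝ) + 1 := by positivity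
  set s : ℝ := k ^ ((N:ℝ)/((N:ℝ)+1)) with hs
  have hs1 : 1 ≤ s := Real.one_le_rpow hk (by positivity)
  have hs0 : 0 < s := lt_of_lt_of_le one_pos hs1
  -- split the set
  have hsub : {x | k < |g x|} ⊆ {x | s < |v x|} ∪ ({x | |v x| ≤ s} ∩ {x | k < |g x|}) := by
    intro x hx
    by_cases h : |v x| ≤ s
    · exact Or.inr ⟨h, hx⟩
    · exact Or.inl (lt_of_not_ge h)
  have hVs : MeasurableSet {x | |v x| ≤ s} := measurableSet_le hv.abs measurable_const
  have hGk : MeasurableSet {x | k < |g x|} := measurableSet_lt measurable_const hg.abs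
  have hsplit : μ {x | k < |g x|} ≤
      μ {x | s < |v x|} + μ ({x | |v x| ≤ s} ∩ {x | k < |g x|}) :=
    le_trans (measure_mono hsub) (measure_union_le _ _)
  -- Chebyshev
  have hkp0 : (0:ℝ) < k ^ p := Real.rpow_pos_of_pos hk0 p
  have cheb : ENNReal.ofReal (k ^ p) * μ ({x | |v x| ≤ s} ∩ {x | k < |g x|}) ≤
      ∫⁻ x in {x | |v x| ≤ s}, ENNReal.ofReal (|g x| ^ p) ∂μ := by
    calc ENNReal.ofReal (k ^ p) * μ ({x | |v x| ≤ s} ∩ {x | k < |g x|})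
        = ∫⁻ _ in ({x | |v x| ≤ s} ∩ {x | k < |g x|}), ENNReal.ofReal (k ^ p) ∂μ := by
          rw [setLIntegral_const, mul_comm]
      _ ≤ ∫⁻ x in ({x | |v x| ≤ s} ∩ {x | k < |g x|}), ENNReal.ofReal (|g x| ^ p) ∂μ := by
          refine setLIntegral_mono' (hVs.inter hGk) ?_
          intro x hx
          exact ENNReal.ofReal_le_ofReal
            (Real.rpow_le_rpow hk0.le hx.2.le (le_of_lt (lt_trans one_pos hp)))
      _ ≤ ∫⁻ x in {x | |v x| ≤ s}, ENNReal.ofReal (|g x| ^ p) ∂μ :=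
          lintegral_mono_set Set.inter_subset_left
  have cheb2 : μ ({x | |v x| ≤ s} ∩ {x | k < |g x|}) ≤ ENNReal.ofReal (c * M * s / k ^ p) := by
    have h := le_trans cheb (h2 s hs1)
    rw [ENNReal.ofReal_div_of_pos hkp0]
    rw [ENNReal.le_div_iff_mul_le (Or.inl (ENNReal.ofReal_pos.2 hkp0).ne') (Or.inl ENNReal.ofReal_ne_top)]
    rwa [mul_comm] at h
  have total : μ {x | k < |g x|} ≤
      ENNReal.ofReal (C₁ * M * s ^ (-(p - 1 + p / N)) + c * M * s / k ^ p) := by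
    rw [ENNReal.ofReal_add (by positivity) (by positivity)]
    exact le_trans hsplit (add_le_add (h1 s hs1) cheb2)
  refine le_trans total (ENNReal.ofReal_le_ofReal ?_)
  -- exponent algebra
  have e1 : s ^ (-(p - 1 + p / N)) = k ^ (-(p - (N:ℝ) / ((N:ℝ) + 1))) := by
    rw [hs, ← Real.rpow_mul hk0.le]
    congr 1
    field_simp
    ring
  have e2 : s / k ^ p = k ^ (-(p - (N:ℝ) / ((N:ℝ) + 1))) := by
    rw [hs, div_eq_mul_inv, ← Real.rpow_neg hk0.le, ← Real.rpow_add hk0]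
    congr 1
    ring
  have hkm : 0 ≤ k ^ (-(p - (N:ℝ) / ((N:ℝ) + 1))) := Real.rpow_nonneg hk0.le _
  have hMe : 0 ≤ M ^ ((p + (N:ℝ)) / (N:ℝ)) := Real.rpow_nonneg (by linarith) _
  rw [e1]
  have : c * M * s / k ^ p = c * M * (s / k ^ p) := by ring
  rw [this, e2]
  have hM' : M ≤ M + M ^ ((p + (N:ℝ)) / (N:ℝ)) := by linarith
  nlinarith [mul_le_mul_of_nonneg_right (mul_le_mul_of_nonneg_left hM' (by linarith : (0:ℝ) ≤ C₁ + c)) hkm, mul_le_mul_of_nonneg_right hM' hkm, hkm]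
end
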